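/- Let $a<b$ be real, let $T_0:[a,b]\to M_n(\mathbb{C})$ be continuously differentiable and $T_1,T_2,T_3:[a,b]\to M_n(\mathbb{C})$ be continuous, all skew-hermitian valued, let $c,x_1,x_2,x_3\in\mathbb{R}$, and set $\gamma = T_0 - ic$. Then for every pair $u_a,u_b\in\mathbb{C}^n$ there exists a unique twice continuously differentiable $v:[a,b]\to\mathbb{C}^n$ satisfying $(v'+\gamma v)' + \gamma(v'+\gamma v) + \sum_{j=1}^3 (T_j - ix_j)^2 v = 0$ on $[a,b]$ with boundary values $v(a)=u_a$ and $v(b)=u_b$. -/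

import Mathlib

open Matrix Set

/-- `(v, v', v'')` is a twice continuously differentiable solution on `[a, b]` of the
boundary-value problem `(v' + γv)' + γ(v' + γv) + Σⱼ (Tⱼ - ixⱼ)² v = 0`,
`v(a) = uₐ`, `v(b) = u_b`, where `γ = T0 - ic`. -/
def IsDirichletNahmSol {n : ℕ} (a b : ℝ)
    (T0 T0' T1 T2 T3 : ℝ → Matrix (Fin n) (Fin n) ℂ)
    (c x1 x2 x3 : ℝ) (ua ub : Fin n → ℂ)
    (v v' v'' : ℝ → Fin n → ℂ) : Prop :=
  (∀ z ∈ Icc a b, ∀ i, HasDerivWithinAt (fun t => v t i) (v' z i) (Icc a b) z) ∧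
  (∀ z ∈ Icc a b, ∀ i, HasDerivWithinAt (fun t => v' t i) (v'' z i) (Icc a b) z) ∧
  (∀ i, ContinuousOn (fun z => v'' z i) (Icc a b)) ∧
  (∀ z ∈ Icc a b,
      (v'' z + (T0' z).mulVec (v z)
          + (T0 z - (Complex.I * ((c : ℝ) : ℂ))
              • (1 : Matrix (Fin n) (Fin n) ℂ)).mulVec (v' z))
        + (T0 z - (Complex.I * ((c : ℝ) : ℂ))
              • (1 : Matrix (Fin n) (Fin n) ℂ)).mulVec
            (v' z + (T0 z - (Complex.I * ((c : ℝ) : ℂ))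
              • (1 : Matrix (Fin n) (Fin n) ℂ)).mulVec (v z))
        + ((T1 z - (Complex.I * ((x1 : ℝ) : ℂ)) • (1 : Matrix (Fin n) (Fin n) ℂ))
            * (T1 z - (Complex.I * ((x1 : ℝ) : ℂ)) • (1 : Matrix (Fin n) (Fin n) ℂ))).mulVec (v z)
        + ((T2 z - (Complex.I * ((x2 : ℝ) : ℂ)) • (1 : Matrix (Fin n) (Fin n) ℂ))
            * (T2 z - (Complex.I * ((x2 : ℝ) : ℂ)) • (1 : Matrix (Fin n) (Fin n) ℂ))).mulVec (v z)
        + ((T3 z - (Complex.I * ((x3 : ℝ) : ℂ)) • (1 : Matrix (Fin n) (Fin n) ℂ))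
            * (T3 z - (Complex.I * ((x3 : ℝ) : ℂ)) • (1 : Matrix (Fin n) (Fin n) ℂ))).mulVec (v z)
        = 0) ∧
  v a = ua ∧ v b = ub

open Topology Filter

namespace NahmAux


variable {E : Type*} [NormedAddCommGroup E] [NormedSpace ℝ E]

theorem glue_deriv {t0 t1 b : ℝ} (h01 : t0 ≤ t1) (h1b : t1 ≤ b) {f g d : ℝ → E}
    (hf : ∀ t ∈ Icc t0 t1, HasDerivWithinAt f (d t) (Icc t0 t1) t)
    (hg : ∀ t ∈ Icc t1 b, HasDerivWithinAt g (d t) (Icc t1 b) t)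
    (hfg : f t1 = g t1) :
    ∀ t ∈ Icc t0 b, HasDerivWithinAt (fun s => if s ≤ t1 then f s else g s) (d t) (Icc t0 b) t := by
  intro t ht
  have hxf : EqOn (fun s => if s ≤ t1 then f s else g s) f (Icc t0 t1) := fun s hs => if_pos hs.2
  have hxg : EqOn (fun s => if s ≤ t1 then f s else g s) g (Icc t1 b) := by
    intro s hs
    by_cases h : s ≤ t1
    · have hs1 : s = t1 := le_antisymm h hs.1
      simp only [hs1, if_pos le_rfl, hfg]
    · simp only [if_neg h]
  have hunion : Icc t0 t1 ∪ Icc t1 b = Icc t0 b := Icc_union_Icc_eq_Icc h01 h1b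
  rcases lt_trichotomy t t1 with hlt | heq | hgt
  · have h1 : HasDerivWithinAt (fun s => if s ≤ t1 then f s else g s) (d t) (Icc t0 t1) t :=
      (hf t ⟨ht.1, hlt.le⟩).congr hxf (hxf ⟨ht.1, hlt.le⟩)
    refine h1.mono_of_mem_nhdsWithin ?_
    have h2 : Icc t0 b ∩ Iic t1 ∈ 𝓝[Icc t0 b] t := inter_mem_nhdsWithin _ (Iic_mem_nhds hlt)
    exact Filter.mem_of_superset h2 fun s hs => ⟨hs.1.1, hs.2⟩
  · have hmemf : t ∈ Icc t0 t1 := ⟨ht.1, heq.le⟩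
    have hmemg : t ∈ Icc t1 b := ⟨heq.ge, ht.2⟩
    have h1 := (hf t hmemf).congr hxf (hxf hmemf)
    have h2 := (hg t hmemg).congr hxg (hxg hmemg)
    exact hunion ▸ h1.union h2
  · have h1 : HasDerivWithinAt (fun s => if s ≤ t1 then f s else g s) (d t) (Icc t1 b) t :=
      (hg t ⟨hgt.le, ht.2⟩).congr hxg (hxg ⟨hgt.le, ht.2⟩)
    refine h1.mono_of_mem_nhdsWithin ?_
    have h2 : Icc t0 b ∩ Ici t1 ∈ 𝓝[Icc t0 b] t := inter_mem_nhdsWithin _ (Ici_mem_nhds hgt)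
    exact Filter.mem_of_superset h2 fun s hs => ⟨hs.2, hs.1.2⟩

theorem exists_sol_step [CompleteSpace E] (F : ℝ → E → E) (K : ℝ)
    (hlip : ∀ t, LipschitzWith (Real.toNNReal K) (F t))
    (hcont : ∀ x, Continuous fun t => F t x)
    {t0 t1 : ℝ} (h01 : t0 ≤ t1) (hK : 0 ≤ K) (hstep : K * (t1 - t0) ≤ 1/2) (x0 : E) :
    ∃ x : ℝ → E, x t0 = x0 ∧ ∀ t ∈ Icc t0 t1, HasDerivWithinAt x (F t (x t)) (Icc t0 t1) t := by
  obtain ⟨M0, hM0⟩ := (isCompact_Icc (a := t0) (b := t1)).exists_bound_of_continuousOn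
    (hcont x0).continuousOn
  set M := max M0 0 with hM
  have hMnn : 0 ≤ M := le_max_right _ _
  have hM0' : ∀ t ∈ Icc t0 t1, ‖F t x0‖ ≤ M := fun t ht => (hM0 t ht).trans (le_max_left _ _)
  have h01' : 0 ≤ t1 - t0 := sub_nonneg.2 h01
  set R := 2 * M * (t1 - t0) with hR
  have hRnn : 0 ≤ R := by positivity
  have hpl : IsPicardLindelof F (tmin := t0) (tmax := t1) ⟨t0, le_rfl, h01⟩ x0
      (Real.toNNReal R) 0 (Real.toNNReal (M + K * R)) (Real.toNNReal K) := by
    constructor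
    · exact fun t _ => (hlip t).lipschitzOnWith
    · exact fun x _ => (hcont x).continuousOn
    · intro t ht x hx
      rw [Real.coe_toNNReal _ (add_nonneg hMnn (mul_nonneg hK hRnn))]
      have h1 : ‖F t x‖ - ‖F t x0‖ ≤ ‖F t x - F t x0‖ := norm_sub_norm_le _ _
      have h2 : dist (F t x) (F t x0) ≤ K * dist x x0 := by
        have := (hlip t).dist_le_mul x x0
        rwa [Real.coe_toNNReal _ hK] at this
      rw [dist_eq_norm, dist_eq_norm] at h2
      have h3 : ‖x - x0‖ ≤ R := by
        have := Metric.mem_closedBall.1 hx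
        rwa [dist_eq_norm, Real.coe_toNNReal _ hRnn] at this
      have h4 : K * ‖x - x0‖ ≤ K * R := mul_le_mul_of_nonneg_left h3 hK
      have h5 := hM0' t ht
      linarith
    · rw [Real.coe_toNNReal _ (add_nonneg hMnn (mul_nonneg hK hRnn)),
        Real.coe_toNNReal _ hRnn, NNReal.coe_zero, sub_zero]
      show (M + K * R) * max (t1 - t0) (t0 - t0) ≤ R
      have : max (t1 - t0) (t0 - t0) = t1 - t0 := by
        rw [sub_self]; exact max_eq_left h01'
      rw [this]
      nlinarith
  obtain ⟨x, hx0, hx⟩ := hpl.exists_eq_forall_mem_Icc_hasDerivWithinAt₀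
  exact ⟨x, hx0, hx⟩

theorem exists_sol_many [CompleteSpace E] (F : ℝ → E → E) (K : ℝ) (hK : 0 ≤ K)
    (hlip : ∀ t, LipschitzWith (Real.toNNReal K) (F t))
    (hcont : ∀ x, Continuous fun t => F t x) :
    ∀ (m : ℕ) (t0 b : ℝ), t0 ≤ b → (K + 1) * (b - t0) ≤ m * (1/2) →
      ∀ x0 : E, ∃ x : ℝ → E, x t0 = x0 ∧
        ∀ t ∈ Icc t0 b, HasDerivWithinAt x (F t (x t)) (Icc t0 b) t := by
  intro m
  induction m with
  | zero =>
    intro t0 b h0b hm x0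
    have hb0 : b = t0 := le_antisymm (by nlinarith) h0b
    subst hb0
    refine ⟨fun _ => x0, rfl, ?_⟩
    intro t ht
    have htt : t = b := le_antisymm ht.2 ht.1
    subst htt
    rw [Icc_self, hasDerivWithinAt_iff_tendsto_slope]
    simp
  | succ m ih =>
    intro t0 b h0b hm x0
    have hKpos : (0:ℝ) < K + 1 := by linarith
    set δ : ℝ := 1 / (2 * (K + 1)) with hδ
    have hδpos : 0 < δ := by positivity
    set t1 := min (t0 + δ) b with ht1
    have h01 : t0 ≤ t1 := le_min (by linarith) h0b
    have h1b : t1 ≤ b := min_le_right _ _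
    have hKδ : (K + 1) * δ = 1/2 := by
      rw [hδ]; field_simp
    have hstep : K * (t1 - t0) ≤ 1 / 2 := by
      have h1 : t1 - t0 ≤ δ := by
        have := min_le_left (t0 + δ) b
        simp only [ht1] at *
        linarith
      have h2 : K * (t1 - t0) ≤ K * δ := mul_le_mul_of_nonneg_left h1 hK
      nlinarith
    obtain ⟨x1, hx10, hx1⟩ := exists_sol_step F K hlip hcont h01 hK hstep x0
    have hrem : (K + 1) * (b - t1) ≤ m * (1/2) := by
      push_cast at hm
      rcases le_total (t0 + δ) b with hc | hc
      · have he : t1 = t0 + δ := min_eq_left hc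
        rw [he]
        have expand : (K+1)*(b - (t0+δ)) = (K+1)*(b-t0) - (K+1)*δ := by ring
        rw [expand, hKδ]
        linarith
      · have he : t1 = b := min_eq_right hc
        rw [he]
        simp only [sub_self, mul_zero]
        positivity
    obtain ⟨x2, hx20, hx2⟩ := ih t1 b h1b hrem (x1 t1)
    refine ⟨fun s => if s ≤ t1 then x1 s else x2 s, by show (if t0 ≤ t1 then x1 t0 else x2 t0) = x0; rw [if_pos h01]; exact hx10, ?_⟩
    intro t ht
    have hf : ∀ s ∈ Icc t0 t1,
        HasDerivWithinAt x1 (F s (if s ≤ t1 then x1 s else x2 s)) (Icc t0 t1) s := by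
      intro s hs; rw [if_pos hs.2]; exact hx1 s hs
    have hg : ∀ s ∈ Icc t1 b,
        HasDerivWithinAt x2 (F s (if s ≤ t1 then x1 s else x2 s)) (Icc t1 b) s := by
      intro s hs
      by_cases h : s ≤ t1
      · have hs1 : s = t1 := le_antisymm h hs.1
        subst hs1
        rw [if_pos h, ← hx20]
        exact hx2 _ hs
      · rw [if_neg h]; exact hx2 s hs
    exact glue_deriv h01 h1b hf hg hx20.symm t ht

theorem exists_sol_Icc [CompleteSpace E] (F : ℝ → E → E) (K : ℝ) (hK : 0 ≤ K)
    (hlip : ∀ t, LipschitzWith (Real.toNNReal K) (F t))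
    (hcont : ∀ x, Continuous fun t => F t x)
    {a b : ℝ} (hab : a ≤ b) (x0 : E) :
    ∃ x : ℝ → E, x a = x0 ∧ ∀ t ∈ Icc a b, HasDerivWithinAt x (F t (x t)) (Icc a b) t := by
  refine exists_sol_many F K hK hlip hcont ⌈(K + 1) * (b - a) * 2⌉₊ a b hab ?_ x0
  have h1 : (K + 1) * (b - a) * 2 ≤ (⌈(K + 1) * (b - a) * 2⌉₊ : ℝ) := Nat.le_ceil _
  linarith

theorem sol_unique (F : ℝ → E → E) (K : NNReal) (hlip : ∀ t, LipschitzWith K (F t))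
    {a b : ℝ} {x y : ℝ → E}
    (hx : ∀ t ∈ Icc a b, HasDerivWithinAt x (F t (x t)) (Icc a b) t)
    (hy : ∀ t ∈ Icc a b, HasDerivWithinAt y (F t (y t)) (Icc a b) t)
    (h0 : x a = y a) : ∀ t ∈ Icc a b, x t = y t := by
  have key : ∀ (z : ℝ → E), (∀ t ∈ Icc a b, HasDerivWithinAt z (F t (z t)) (Icc a b) t) →
      ∀ t ∈ Ico a b, HasDerivWithinAt z (F t (z t)) (Ici t) t := by
    intro z hz t ht
    refine (hz t ⟨ht.1, ht.2.le⟩).mono_of_mem_nhdsWithin ?_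
    have h2 : Ici t ∩ Iio b ∈ 𝓝[Ici t] t := inter_mem_nhdsWithin _ (Iio_mem_nhds ht.2)
    exact Filter.mem_of_superset h2 fun s hs => ⟨ht.1.trans hs.1, hs.2.le⟩
  exact fun t ht => ODE_solution_unique_of_mem_Icc_right (s := fun _ => univ)
    (fun t _ => (hlip t).lipschitzOnWith)
    (fun t ht => (hx t ht).continuousWithinAt) (key x hx) (fun _ _ => mem_univ _)
    (fun t ht => (hy t ht).continuousWithinAt) (key y hy) (fun _ _ => mem_univ _) h0 ht



variable {n : ℕ}

theorem mulVec_apply_sum (M : Matrix (Fin n) (Fin n) ℂ) (y : Fin n → ℂ) (i : Fin n) :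
    (M *ᵥ y) i = ∑ j, M i j * y j := rfl

theorem norm_mulVec_le (M : Matrix (Fin n) (Fin n) ℂ) (x : Fin n → ℂ) {C : ℝ} (hC : 0 ≤ C)
    (h : ∀ i j, ‖M i j‖ ≤ C) : ‖M *ᵥ x‖ ≤ (n * C) * ‖x‖ := by
  refine (pi_norm_le_iff_of_nonneg (by positivity)).2 fun i => ?_
  rw [mulVec_apply_sum]
  calc ‖∑ j, M i j * x j‖ ≤ ∑ j, ‖M i j * x j‖ := norm_sum_le _ _
    _ ≤ ∑ _j : Fin n, C * ‖x‖ := by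
        refine Finset.sum_le_sum fun j _ => ?_
        rw [norm_mul]
        exact mul_le_mul (h i j) (norm_le_pi_norm x j) (norm_nonneg _) hC
    _ = (n * C) * ‖x‖ := by
        rw [Finset.sum_const, Finset.card_univ, Fintype.card_fin]
        push_cast; ring

/-- the first-order vector field -/
noncomputable def Fv (γ S : ℝ → Matrix (Fin n) (Fin n) ℂ) :
    ℝ → ((Fin n → ℂ) × (Fin n → ℂ)) → ((Fin n → ℂ) × (Fin n → ℂ)) :=
  fun t x => (x.2 - γ t *ᵥ x.1, -(γ t *ᵥ x.2) - S t *ᵥ x.1)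

theorem Fv_add (γ S : ℝ → Matrix (Fin n) (Fin n) ℂ) (t : ℝ) (x y) :
    Fv γ S t (x + y) = Fv γ S t x + Fv γ S t y := by
  refine Prod.ext ?_ ?_ <;>
    simp only [Fv, Prod.fst_add, Prod.snd_add, Matrix.mulVec_add] <;> abel

theorem Fv_sub (γ S : ℝ → Matrix (Fin n) (Fin n) ℂ) (t : ℝ) (x y) :
    Fv γ S t x - Fv γ S t y = Fv γ S t (x - y) := by
  refine Prod.ext ?_ ?_ <;>
    simp only [Fv, Prod.fst_sub, Prod.snd_sub, Matrix.mulVec_sub] <;> abel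

theorem Fv_smul (γ S : ℝ → Matrix (Fin n) (Fin n) ℂ) (t : ℝ) (c : ℂ) (x) :
    Fv γ S t (c • x) = c • Fv γ S t x := by
  refine Prod.ext ?_ ?_ <;>
    simp only [Fv, Prod.smul_fst, Prod.smul_snd, Matrix.mulVec_smul, smul_sub, smul_neg]

theorem Fv_lip (γ S : ℝ → Matrix (Fin n) (Fin n) ℂ) (Cγ CS : ℝ) (hCγ : 0 ≤ Cγ) (hCS : 0 ≤ CS)
    (hγ : ∀ t i j, ‖γ t i j‖ ≤ Cγ) (hS : ∀ t i j, ‖S t i j‖ ≤ CS) (t : ℝ) :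
    LipschitzWith (Real.toNNReal (1 + n * Cγ + (n * Cγ + n * CS))) (Fv γ S t) := by
  have hKnn : (0:ℝ) ≤ 1 + n * Cγ + (n * Cγ + n * CS) := by positivity
  refine LipschitzWith.of_dist_le_mul fun x y => ?_
  rw [dist_eq_norm, dist_eq_norm, Fv_sub, Real.coe_toNNReal _ hKnn]
  set w := x - y with hw
  have h1 : ‖w.2 - γ t *ᵥ w.1‖ ≤ ‖w.2‖ + (n * Cγ) * ‖w.1‖ :=
    (norm_sub_le _ _).trans (add_le_add le_rfl (norm_mulVec_le _ _ hCγ (hγ t)))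
  have h2 : ‖-(γ t *ᵥ w.2) - S t *ᵥ w.1‖ ≤ (n * Cγ) * ‖w.2‖ + (n * CS) * ‖w.1‖ := by
    refine (norm_sub_le _ _).trans (add_le_add ?_ (norm_mulVec_le _ _ hCS (hS t)))
    rw [norm_neg]; exact norm_mulVec_le _ _ hCγ (hγ t)
  have hf : ‖w.1‖ ≤ ‖w‖ := norm_fst_le w
  have hs : ‖w.2‖ ≤ ‖w‖ := norm_snd_le w
  have hP : ‖Fv γ S t w‖ = max ‖w.2 - γ t *ᵥ w.1‖ ‖-(γ t *ᵥ w.2) - S t *ᵥ w.1‖ := rfl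
  rw [hP]
  have hwn : 0 ≤ ‖w‖ := norm_nonneg w
  have h3 : (n:ℝ) * Cγ * ‖w.1‖ ≤ (n:ℝ) * Cγ * ‖w‖ :=
    mul_le_mul_of_nonneg_left hf (by positivity)
  have h4 : (n:ℝ) * Cγ * ‖w.2‖ ≤ (n:ℝ) * Cγ * ‖w‖ :=
    mul_le_mul_of_nonneg_left hs (by positivity)
  have h5 : (n:ℝ) * CS * ‖w.1‖ ≤ (n:ℝ) * CS * ‖w‖ :=
    mul_le_mul_of_nonneg_left hf (by positivity)
  have hcs : (0:ℝ) ≤ (n:ℝ) * CS * ‖w‖ := by positivity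
  have hcg : (0:ℝ) ≤ (n:ℝ) * Cγ * ‖w‖ := by positivity
  have hexp : (1 + ↑n * Cγ + (↑n * Cγ + ↑n * CS)) * ‖w‖
      = ‖w‖ + ↑n * Cγ * ‖w‖ + (↑n * Cγ * ‖w‖ + ↑n * CS * ‖w‖) := by ring
  refine max_le (by rw [hexp]; linarith) (by rw [hexp]; linarith)

theorem Fv_cont (γ S : ℝ → Matrix (Fin n) (Fin n) ℂ)
    (hγ : ∀ i j, Continuous fun t => γ t i j) (hS : ∀ i j, Continuous fun t => S t i j)
    (x : (Fin n → ℂ) × (Fin n → ℂ)) : Continuous fun t => Fv γ S t x := by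
  unfold Fv
  refine Continuous.prodMk ?_ ?_
  · refine continuous_pi fun i => ?_
    simp only [Pi.sub_apply, mulVec_apply_sum]
    exact continuous_const.sub (continuous_finset_sum _ fun j _ => (hγ i j).mul continuous_const)
  · refine continuous_pi fun i => ?_
    simp only [Pi.sub_apply, Pi.neg_apply, mulVec_apply_sum]
    exact ((continuous_finset_sum _ fun j _ => (hγ i j).mul continuous_const).neg).sub
      (continuous_finset_sum _ fun j _ => (hS i j).mul continuous_const)



variable {n : ℕ}

theorem mulVec_apply_sum' (M : Matrix (Fin n) (Fin n) ℂ) (y : Fin n → ℂ) (i : Fin n) :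
    (M *ᵥ y) i = ∑ j, M i j * y j := rfl

theorem derivWithin_unique {F : Type*} [NormedAddCommGroup F] [NormedSpace ℝ F]
    {f : ℝ → F} {d1 d2 : F} {a b z : ℝ} (hab : a < b) (hz : z ∈ Icc a b)
    (h1 : HasDerivWithinAt f d1 (Icc a b) z) (h2 : HasDerivWithinAt f d2 (Icc a b) z) :
    d1 = d2 := by
  have hu := uniqueDiffOn_Icc hab z hz
  rw [← h1.derivWithin hu, ← h2.derivWithin hu]

theorem hasDerivWithinAt_conj {f : ℝ → ℂ} {d : ℂ} {s : Set ℝ} {z : ℝ}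
    (hf : HasDerivWithinAt f d s z) :
    HasDerivWithinAt (fun t => (starRingEnd ℂ) (f t)) ((starRingEnd ℂ) d) s z := by
  have := (Complex.conjCLE.toContinuousLinearMap.hasFDerivAt
    (x := f z)).comp_hasDerivWithinAt z hf
  simpa [Function.comp_def] using this

theorem hasDerivWithinAt_mulVec {M : ℝ → Matrix (Fin n) (Fin n) ℂ}
    {M' : Matrix (Fin n) (Fin n) ℂ} {y : ℝ → Fin n → ℂ} {y' : Fin n → ℂ} {s : Set ℝ} {z : ℝ}
    (hM : ∀ i j, HasDerivWithinAt (fun t => M t i j) (M' i j) s z)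
    (hy : ∀ i, HasDerivWithinAt (fun t => y t i) (y' i) s z) (i : Fin n) :
    HasDerivWithinAt (fun t => (M t *ᵥ y t) i) ((M' *ᵥ y z + M z *ᵥ y') i) s z := by
  have h1 : (M' *ᵥ y z + M z *ᵥ y') i = ∑ j, (M' i j * y z j + M z i j * y' j) := by
    simp [mulVec_apply_sum', Finset.sum_add_distrib]
  have h2 : (fun t => (M t *ᵥ y t) i) = fun t => ∑ j, M t i j * y t j := rfl
  rw [h1, h2]
  exact HasDerivWithinAt.fun_sum fun j _ => (hM i j).mul (hy j)

theorem contOn_mulVec {M : ℝ → Matrix (Fin n) (Fin n) ℂ} {y : ℝ → Fin n → ℂ} {s : Set ℝ}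
    (hM : ∀ i j, ContinuousOn (fun z => M z i j) s)
    (hy : ∀ j, ContinuousOn (fun z => y z j) s) (i : Fin n) :
    ContinuousOn (fun z => (M z *ᵥ y z) i) s := by
  have h2 : (fun z => (M z *ᵥ y z) i) = fun z => ∑ j, M z i j * y z j := rfl
  rw [h2]
  exact continuousOn_finset_sum _ fun j _ => (hM i j).mul (hy j)

/-- real pairing -/
noncomputable def Bform (x y : Fin n → ℂ) : ℝ := (∑ i, x i * (starRingEnd ℂ) (y i)).re

theorem Bform_eq_dot (x y : Fin n → ℂ) : Bform x y = (x ⬝ᵥ star y).re := rfl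

theorem Bform_comm (x y : Fin n → ℂ) : Bform x y = Bform y x := by
  rw [Bform_eq_dot, Bform_eq_dot]
  rw [Matrix.dotProduct_star]
  simp [Complex.star_def]

theorem Bform_add_left (x y w : Fin n → ℂ) : Bform (x + y) w = Bform x w + Bform y w := by
  simp only [Bform_eq_dot, add_dotProduct, Complex.add_re]

theorem Bform_add_right (x y w : Fin n → ℂ) : Bform x (y + w) = Bform x y + Bform x w := by
  simp only [Bform_eq_dot, star_add, dotProduct_add, Complex.add_re]

theorem Bform_zero_left (y : Fin n → ℂ) : Bform 0 y = 0 := by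
  simp [Bform_eq_dot]

theorem Bform_self_eq (x : Fin n → ℂ) : Bform x x = ∑ i, Complex.normSq (x i) := by
  simp [Bform, Complex.re_sum, Complex.mul_conj]

theorem Bform_self_nonneg (x : Fin n → ℂ) : 0 ≤ Bform x x := by
  rw [Bform_self_eq]
  exact Finset.sum_nonneg fun i _ => Complex.normSq_nonneg _

theorem Bform_self_zero {x : Fin n → ℂ} (h : Bform x x = 0) : x = 0 := by
  rw [Bform_self_eq] at h
  funext i
  have := (Finset.sum_eq_zero_iff_of_nonneg
    (fun j _ => Complex.normSq_nonneg (x j))).1 h i (Finset.mem_univ i)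
  exact Complex.normSq_eq_zero.1 this

theorem Bform_adj (M : Matrix (Fin n) (Fin n) ℂ) (x y : Fin n → ℂ) :
    Bform (M *ᵥ x) y = Bform x (Mᴴ *ᵥ y) := by
  rw [Bform_eq_dot, Bform_eq_dot]
  congr 1
  rw [Matrix.star_mulVec, Matrix.conjTranspose_conjTranspose]
  rw [← Matrix.mulVec_transpose]
  rw [Matrix.dotProduct_mulVec]
  rw [← Matrix.mulVec_transpose, Matrix.transpose_transpose]

theorem Bform_skew {M : Matrix (Fin n) (Fin n) ℂ} (hM : Mᴴ = -M) (x y : Fin n → ℂ) :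
    Bform (M *ᵥ x) y = - Bform x (M *ᵥ y) := by
  rw [Bform_adj, hM, Matrix.neg_mulVec]
  rw [Bform_eq_dot, Bform_eq_dot, star_neg, dotProduct_neg, Complex.neg_re]

theorem Bform_skew_self {M : Matrix (Fin n) (Fin n) ℂ} (hM : Mᴴ = -M) (x : Fin n → ℂ) :
    Bform (M *ᵥ x) x = 0 := by
  have h1 := Bform_skew hM x x
  have h2 := Bform_comm x (M *ᵥ x)
  linarith

theorem hasDerivWithinAt_Bform {x y : ℝ → Fin n → ℂ} {x' y' : Fin n → ℂ} {s : Set ℝ} {z : ℝ}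
    (hx : ∀ i, HasDerivWithinAt (fun t => x t i) (x' i) s z)
    (hy : ∀ i, HasDerivWithinAt (fun t => y t i) (y' i) s z) :
    HasDerivWithinAt (fun t => Bform (x t) (y t)) (Bform x' (y z) + Bform (x z) y') s z := by
  have hC : HasDerivWithinAt (fun t => ∑ i, x t i * (starRingEnd ℂ) (y t i))
      (∑ i, (x' i * (starRingEnd ℂ) (y z i) + x z i * (starRingEnd ℂ) (y' i))) s z :=
    HasDerivWithinAt.fun_sum fun i _ => (hx i).mul (hasDerivWithinAt_conj (hy i))
  have h := Complex.reCLM.hasFDerivAt.comp_hasDerivWithinAt z hC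
  have hval : Complex.reCLM (∑ i, (x' i * (starRingEnd ℂ) (y z i)
      + x z i * (starRingEnd ℂ) (y' i))) = Bform x' (y z) + Bform (x z) y' := by
    simp [Bform, Complex.re_sum, Finset.sum_add_distrib]
  rw [hval] at h
  exact h

theorem vanish_of_zero_bdry {n : ℕ} {a b : ℝ} (hab : a < b)
    (T0 T0' T1 T2 T3 : ℝ → Matrix (Fin n) (Fin n) ℂ)
    (hT0 : ∀ z ∈ Icc a b, ∀ i j, HasDerivWithinAt (fun t => T0 t i j) (T0' z i j) (Icc a b) z)
    (hskew : ∀ z ∈ Icc a b,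
        (T0 z)ᴴ = -T0 z ∧ (T1 z)ᴴ = -T1 z ∧ (T2 z)ᴴ = -T2 z ∧ (T3 z)ᴴ = -T3 z)
    (c x1 x2 x3 : ℝ) (v v' v'' : ℝ → Fin n → ℂ)
    (hsol : IsDirichletNahmSol a b T0 T0' T1 T2 T3 c x1 x2 x3 0 0 v v' v'') :
    ∀ z ∈ Icc a b, v z = 0 := by
  obtain ⟨hv1, hv2, hv3, heq, hva, hvb⟩ := hsol
  set Γ : ℝ → Matrix (Fin n) (Fin n) ℂ :=
    fun z => T0 z - (Complex.I * ((c : ℝ) : ℂ)) • (1 : Matrix (Fin n) (Fin n) ℂ) with hΓ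
  set A1 : ℝ → Matrix (Fin n) (Fin n) ℂ :=
    fun z => T1 z - (Complex.I * ((x1 : ℝ) : ℂ)) • (1 : Matrix (Fin n) (Fin n) ℂ) with hA1
  set A2 : ℝ → Matrix (Fin n) (Fin n) ℂ :=
    fun z => T2 z - (Complex.I * ((x2 : ℝ) : ℂ)) • (1 : Matrix (Fin n) (Fin n) ℂ) with hA2
  set A3 : ℝ → Matrix (Fin n) (Fin n) ℂ :=
    fun z => T3 z - (Complex.I * ((x3 : ℝ) : ℂ)) • (1 : Matrix (Fin n) (Fin n) ℂ) with hA3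
  have skew_smul : ∀ (T : Matrix (Fin n) (Fin n) ℂ) (r : ℝ), Tᴴ = -T →
      (T - (Complex.I * (r : ℂ)) • 1)ᴴ = -(T - (Complex.I * (r : ℂ)) • 1) := by
    intro T r hT
    rw [conjTranspose_sub, hT, conjTranspose_smul, conjTranspose_one]
    have hc : star (Complex.I * (r : ℂ)) = -(Complex.I * (r : ℂ)) := by
      rw [Complex.star_def, _root_.map_mul, Complex.conj_I, Complex.conj_ofReal]
      ring
    rw [hc, neg_smul]
    abel
  have hΓskew : ∀ z ∈ Icc a b, (Γ z)ᴴ = -(Γ z) := fun z hz => skew_smul _ _ (hskew z hz).1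
  have hA1skew : ∀ z ∈ Icc a b, (A1 z)ᴴ = -(A1 z) := fun z hz => skew_smul _ _ (hskew z hz).2.1
  have hA2skew : ∀ z ∈ Icc a b, (A2 z)ᴴ = -(A2 z) := fun z hz => skew_smul _ _ (hskew z hz).2.2.1
  have hA3skew : ∀ z ∈ Icc a b, (A3 z)ᴴ = -(A3 z) := fun z hz => skew_smul _ _ (hskew z hz).2.2.2
  have hT0'skew : ∀ z ∈ Icc a b, (T0' z)ᴴ = -(T0' z) := by
    intro z hz
    ext i j
    have hset : ∀ t ∈ Icc a b, (starRingEnd ℂ) (T0 t j i) = -(T0 t i j) := by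
      intro t ht
      have h := congrFun (congrFun (hskew t ht).1 i) j
      simpa [Matrix.conjTranspose_apply, Matrix.neg_apply, Complex.star_def] using h
    have h1 : HasDerivWithinAt (fun t => (starRingEnd ℂ) (T0 t j i))
        ((starRingEnd ℂ) (T0' z j i)) (Icc a b) z := hasDerivWithinAt_conj (hT0 z hz j i)
    have h2 : HasDerivWithinAt (fun t => (starRingEnd ℂ) (T0 t j i))
        (-(T0' z i j)) (Icc a b) z :=
      ((hT0 z hz i j).neg).congr hset (hset z hz)
    have := derivWithin_unique hab hz h1 h2
    simpa [Matrix.conjTranspose_apply, Matrix.neg_apply, Complex.star_def] using this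
  set f : ℝ → ℝ := fun t => Bform (v t) (v t) with hfdef
  set g : ℝ → ℝ := fun t => Bform (v' t) (v t) + Bform (v t) (v' t) with hgdef
  set h : ℝ → ℝ := fun t => (Bform (v'' t) (v t) + Bform (v' t) (v' t))
      + (Bform (v' t) (v' t) + Bform (v t) (v'' t)) with hhdef
  have hf' : ∀ z ∈ Icc a b, HasDerivWithinAt f (g z) (Icc a b) z := fun z hz =>
    hasDerivWithinAt_Bform (hv1 z hz) (hv1 z hz)
  have hg' : ∀ z ∈ Icc a b, HasDerivWithinAt g (h z) (Icc a b) z := fun z hz =>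
    (hasDerivWithinAt_Bform (hv2 z hz) (hv1 z hz)).add
      (hasDerivWithinAt_Bform (hv1 z hz) (hv2 z hz))
  have hposkey : ∀ z ∈ Icc a b, 0 ≤ h z := by
    intro z hz
    have he := heq z hz
    have h0 := congrArg (fun w => Bform w (v z)) he
    rw [Bform_zero_left] at h0
    simp only [Bform_add_left] at h0
    rw [Bform_skew_self (hT0'skew z hz)] at h0
    rw [Bform_skew (hΓskew z hz) (v' z) (v z)] at h0
    rw [Bform_skew (hΓskew z hz) (v' z + Γ z *ᵥ v z) (v z)] at h0
    rw [← Matrix.mulVec_mulVec (v z) (A1 z) (A1 z)] at h0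
    rw [← Matrix.mulVec_mulVec (v z) (A2 z) (A2 z)] at h0
    rw [← Matrix.mulVec_mulVec (v z) (A3 z) (A3 z)] at h0
    rw [Bform_skew (hA1skew z hz) (A1 z *ᵥ v z) (v z)] at h0
    rw [Bform_skew (hA2skew z hz) (A2 z *ᵥ v z) (v z)] at h0
    rw [Bform_skew (hA3skew z hz) (A3 z *ᵥ v z) (v z)] at h0
    rw [Bform_add_left (v' z) (Γ z *ᵥ v z) (Γ z *ᵥ v z)] at h0
    have hexp : Bform (v' z + Γ z *ᵥ v z) (v' z + Γ z *ᵥ v z)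
        = Bform (v' z) (v' z) + Bform (v' z) (Γ z *ᵥ v z)
          + (Bform (v' z) (Γ z *ᵥ v z) + Bform (Γ z *ᵥ v z) (Γ z *ᵥ v z)) := by
      rw [Bform_add_left, Bform_add_right, Bform_add_right,
        Bform_comm (Γ z *ᵥ v z) (v' z)]
      try ring
    have hnn1 := Bform_self_nonneg (v' z + Γ z *ᵥ v z)
    have hnn2 := Bform_self_nonneg (A1 z *ᵥ v z)
    have hnn3 := Bform_self_nonneg (A2 z *ᵥ v z)
    have hnn4 := Bform_self_nonneg (A3 z *ᵥ v z)
    have hcm := Bform_comm (v z) (v'' z)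
    have hcm2 := Bform_comm (v' z) (Γ z *ᵥ v z)
    show (0:ℝ) ≤ (Bform (v'' z) (v z) + Bform (v' z) (v' z))
      + (Bform (v' z) (v' z) + Bform (v z) (v'' z))
    linarith
  have hfc : ContinuousOn f (Icc a b) := fun z hz => (hf' z hz).continuousWithinAt
  have hgc : ContinuousOn g (Icc a b) := fun z hz => (hg' z hz).continuousWithinAt
  have hmono : MonotoneOn g (Icc a b) := by
    refine monotoneOn_of_hasDerivWithinAt_nonneg (convex_Icc a b) hgc
      (f' := h) ?_ ?_
    · intro z hz
      rw [interior_Icc] at hz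
      exact (hg' z ⟨hz.1.le, hz.2.le⟩).mono interior_subset
    · intro z hz
      rw [interior_Icc] at hz
      exact hposkey z ⟨hz.1.le, hz.2.le⟩
  have hfa : f a = 0 := by
    show Bform (v a) (v a) = 0
    rw [hva]
    exact Bform_zero_left 0
  have hfb : f b = 0 := by
    show Bform (v b) (v b) = 0
    rw [hvb]
    exact Bform_zero_left 0
  have hfle : ∀ z ∈ Icc a b, f z ≤ 0 := by
    intro z hz
    rcases eq_or_lt_of_le hz.1 with heqa | haz
    · rw [← heqa]; exact hfa.le
    rcases eq_or_lt_of_le hz.2 with heqb | hzb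
    · rw [heqb]; exact hfb.le
    by_contra hposf
    push_neg at hposf
    have hDa : ∀ x ∈ Ioo a z, HasDerivAt f (g x) x := by
      intro x hx
      have hxm : x ∈ Icc a b := ⟨hx.1.le, (hx.2.trans hzb).le⟩
      exact (hf' x hxm).hasDerivAt (Icc_mem_nhds hx.1 (hx.2.trans hzb))
    have hDb : ∀ x ∈ Ioo z b, HasDerivAt f (g x) x := by
      intro x hx
      have hxm : x ∈ Icc a b := ⟨(haz.trans hx.1).le, hx.2.le⟩
      exact (hf' x hxm).hasDerivAt (Icc_mem_nhds (haz.trans hx.1) hx.2)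
    obtain ⟨p, hp, hpe⟩ := exists_hasDerivAt_eq_slope f g haz
      (hfc.mono (Icc_subset_Icc le_rfl hz.2)) hDa
    obtain ⟨q, hq, hqe⟩ := exists_hasDerivAt_eq_slope f g hzb
      (hfc.mono (Icc_subset_Icc hz.1 le_rfl)) hDb
    have hgp : 0 < g p := by
      rw [hpe, hfa, sub_zero]
      exact div_pos hposf (sub_pos.2 haz)
    have hgq : g q < 0 := by
      rw [hqe, hfb]
      exact div_neg_of_neg_of_pos (by linarith) (sub_pos.2 hzb)
    have hpq : g p ≤ g q :=
      hmono ⟨hp.1.le, (hp.2.trans hzb).le⟩ ⟨(haz.trans hq.1).le, hq.2.le⟩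
        (hp.2.trans hq.1).le
    linarith
  intro z hz
  exact Bform_self_zero (le_antisymm (hfle z hz) (Bform_self_nonneg (v z)))

/-- `γ`-type matrix -/
noncomputable def gamF {n : ℕ} (T : ℝ → Matrix (Fin n) (Fin n) ℂ) (c : ℝ) :
    ℝ → Matrix (Fin n) (Fin n) ℂ :=
  fun z => T z - (Complex.I * ((c : ℝ) : ℂ)) • (1 : Matrix (Fin n) (Fin n) ℂ)

noncomputable def SmatF {n : ℕ} (T1 T2 T3 : ℝ → Matrix (Fin n) (Fin n) ℂ) (x1 x2 x3 : ℝ) :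
    ℝ → Matrix (Fin n) (Fin n) ℂ :=
  fun z => gamF T1 x1 z * gamF T1 x1 z + gamF T2 x2 z * gamF T2 x2 z
    + gamF T3 x3 z * gamF T3 x3 z

noncomputable def vddF {n : ℕ} (T0 T0' T1 T2 T3 : ℝ → Matrix (Fin n) (Fin n) ℂ)
    (c x1 x2 x3 : ℝ) (x : ℝ → (Fin n → ℂ) × (Fin n → ℂ)) : ℝ → Fin n → ℂ :=
  fun z => (-(gamF T0 c z *ᵥ (x z).2) - SmatF T1 T2 T3 x1 x2 x3 z *ᵥ (x z).1)
    - (T0' z *ᵥ (x z).1 + gamF T0 c z *ᵥ ((x z).2 - gamF T0 c z *ᵥ (x z).1))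

theorem entry_cont_mul {n : ℕ} {M N : ℝ → Matrix (Fin n) (Fin n) ℂ} {s : Set ℝ}
    (hM : ∀ i j, ContinuousOn (fun z => M z i j) s)
    (hN : ∀ i j, ContinuousOn (fun z => N z i j) s) :
    ∀ i j, ContinuousOn (fun z => (M z * N z) i j) s := by
  intro i j
  have h : (fun z => (M z * N z) i j) = fun z => ∑ k, M z i k * N z k j := by
    funext z; exact Matrix.mul_apply
  rw [h]
  exact continuousOn_finset_sum _ fun k _ => (hM i k).mul (hN k j)

theorem gam_entry_cont {n : ℕ} {T : ℝ → Matrix (Fin n) (Fin n) ℂ} {s : Set ℝ} (c : ℝ)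
    (hT : ∀ i j, ContinuousOn (fun z => T z i j) s) :
    ∀ i j, ContinuousOn (fun z => gamF T c z i j) s := by
  intro i j
  have h : (fun z => gamF T c z i j)
      = fun z => T z i j - ((Complex.I * ((c : ℝ) : ℂ)) • (1 : Matrix (Fin n) (Fin n) ℂ)) i j :=
    rfl
  rw [h]
  exact (hT i j).sub continuousOn_const

theorem Smat_entry_cont {n : ℕ} {T1 T2 T3 : ℝ → Matrix (Fin n) (Fin n) ℂ} {s : Set ℝ}
    (x1 x2 x3 : ℝ)
    (hT1 : ∀ i j, ContinuousOn (fun z => T1 z i j) s)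
    (hT2 : ∀ i j, ContinuousOn (fun z => T2 z i j) s)
    (hT3 : ∀ i j, ContinuousOn (fun z => T3 z i j) s) :
    ∀ i j, ContinuousOn (fun z => SmatF T1 T2 T3 x1 x2 x3 z i j) s := by
  intro i j
  have h : (fun z => SmatF T1 T2 T3 x1 x2 x3 z i j)
      = fun z => (gamF T1 x1 z * gamF T1 x1 z) i j + (gamF T2 x2 z * gamF T2 x2 z) i j
        + (gamF T3 x3 z * gamF T3 x3 z) i j := rfl
  rw [h]
  exact ((entry_cont_mul (gam_entry_cont x1 hT1) (gam_entry_cont x1 hT1) i j).add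
    (entry_cont_mul (gam_entry_cont x2 hT2) (gam_entry_cont x2 hT2) i j)).add
    (entry_cont_mul (gam_entry_cont x3 hT3) (gam_entry_cont x3 hT3) i j)

theorem sol_to_triple {n : ℕ} {a b : ℝ} (hab : a < b)
    (T0 T0' T1 T2 T3 : ℝ → Matrix (Fin n) (Fin n) ℂ)
    (hT0 : ∀ z ∈ Icc a b, ∀ i j, HasDerivWithinAt (fun t => T0 t i j) (T0' z i j) (Icc a b) z)
    (hT0' : ∀ i j, ContinuousOn (fun z => T0' z i j) (Icc a b))
    (hT1 : ∀ i j, ContinuousOn (fun z => T1 z i j) (Icc a b))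
    (hT2 : ∀ i j, ContinuousOn (fun z => T2 z i j) (Icc a b))
    (hT3 : ∀ i j, ContinuousOn (fun z => T3 z i j) (Icc a b))
    (c x1 x2 x3 : ℝ) (x : ℝ → (Fin n → ℂ) × (Fin n → ℂ))
    (hx : ∀ t ∈ Icc a b, HasDerivWithinAt x
      (Fv (gamF T0 c) (SmatF T1 T2 T3 x1 x2 x3) t (x t)) (Icc a b) t) :
    IsDirichletNahmSol a b T0 T0' T1 T2 T3 c x1 x2 x3 ((x a).1) ((x b).1)
      (fun t => (x t).1)
      (fun t => (x t).2 - gamF T0 c t *ᵥ (x t).1)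
      (vddF T0 T0' T1 T2 T3 c x1 x2 x3 x) := by
  set Γ := gamF T0 c with hΓdef
  set S := SmatF T1 T2 T3 x1 x2 x3 with hSdef
  have hx1 : ∀ t ∈ Icc a b,
      HasDerivWithinAt (fun s => (x s).1) ((x t).2 - Γ t *ᵥ (x t).1) (Icc a b) t := by
    intro t ht
    have h := (ContinuousLinearMap.fst ℝ (Fin n → ℂ) (Fin n → ℂ)).hasFDerivAt.comp_hasDerivWithinAt
      t (hx t ht)
    simpa [Fv, Function.comp_def] using h
  have hx2 : ∀ t ∈ Icc a b,
      HasDerivWithinAt (fun s => (x s).2) (-(Γ t *ᵥ (x t).2) - S t *ᵥ (x t).1) (Icc a b) t := by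
    intro t ht
    have h := (ContinuousLinearMap.snd ℝ (Fin n → ℂ) (Fin n → ℂ)).hasFDerivAt.comp_hasDerivWithinAt
      t (hx t ht)
    simpa [Fv, Function.comp_def] using h
  have hx1i : ∀ t ∈ Icc a b, ∀ i,
      HasDerivWithinAt (fun s => (x s).1 i) (((x t).2 - Γ t *ᵥ (x t).1) i) (Icc a b) t :=
    fun t ht => hasDerivWithinAt_pi.1 (hx1 t ht)
  have hx2i : ∀ t ∈ Icc a b, ∀ i,
      HasDerivWithinAt (fun s => (x s).2 i) ((-(Γ t *ᵥ (x t).2) - S t *ᵥ (x t).1) i) (Icc a b) t :=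
    fun t ht => hasDerivWithinAt_pi.1 (hx2 t ht)
  have hΓd : ∀ z ∈ Icc a b, ∀ i j,
      HasDerivWithinAt (fun t => Γ t i j) (T0' z i j) (Icc a b) z := by
    intro z hz i j
    have h := (hT0 z hz i j).sub_const
      (((Complex.I * ((c : ℝ) : ℂ)) • (1 : Matrix (Fin n) (Fin n) ℂ)) i j)
    exact h
  have hΓc : ∀ i j, ContinuousOn (fun z => Γ z i j) (Icc a b) :=
    fun i j => fun z hz => ((hΓd z hz i j).continuousWithinAt)
  have hpx : ∀ j, ContinuousOn (fun z => (x z).1 j) (Icc a b) :=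
    fun j z hz => (hx1i z hz j).continuousWithinAt
  have hqx : ∀ j, ContinuousOn (fun z => (x z).2 j) (Icc a b) :=
    fun j z hz => (hx2i z hz j).continuousWithinAt
  have hSc : ∀ i j, ContinuousOn (fun z => S z i j) (Icc a b) :=
    Smat_entry_cont x1 x2 x3 hT1 hT2 hT3
  refine ⟨?_, ?_, ?_, ?_, rfl, rfl⟩
  · exact fun z hz i => hx1i z hz i
  · -- derivative of v'
    intro z hz i
    have hmv := hasDerivWithinAt_mulVec (hΓd z hz) (hx1i z hz) i
    have h := (hx2i z hz i).sub hmv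
    have hval : (-(Γ z *ᵥ (x z).2) - S z *ᵥ (x z).1) i
        - (T0' z *ᵥ (fun s => (x s).1) z + Γ z *ᵥ ((x z).2 - Γ z *ᵥ (x z).1)) i
        = vddF T0 T0' T1 T2 T3 c x1 x2 x3 x z i := by
      simp only [vddF, Pi.sub_apply, Pi.add_apply, Pi.neg_apply, hΓdef, hSdef]
    rw [← hval]
    exact h
  · -- continuity of v''
    intro i
    have hv'c : ∀ j, ContinuousOn (fun z => ((x z).2 - Γ z *ᵥ (x z).1) j) (Icc a b) := by
      intro j
      have : (fun z => ((x z).2 - Γ z *ᵥ (x z).1) j)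
          = fun z => (x z).2 j - (Γ z *ᵥ (x z).1) j := rfl
      rw [this]
      exact (hqx j).sub (contOn_mulVec hΓc hpx j)
    have h : (fun z => vddF T0 T0' T1 T2 T3 c x1 x2 x3 x z i)
        = fun z => (-((Γ z *ᵥ (x z).2) i) - (S z *ᵥ (x z).1) i)
          - ((T0' z *ᵥ (x z).1) i + (Γ z *ᵥ ((x z).2 - Γ z *ᵥ (x z).1)) i) := rfl
    rw [h]
    exact (((contOn_mulVec hΓc hqx i).neg).sub (contOn_mulVec hSc hpx i)).sub
      ((contOn_mulVec hT0' hpx i).add (contOn_mulVec hΓc hv'c i))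
  · -- the equation
    intro z hz
    show (vddF T0 T0' T1 T2 T3 c x1 x2 x3 x z + T0' z *ᵥ (x z).1
          + Γ z *ᵥ ((x z).2 - Γ z *ᵥ (x z).1))
        + Γ z *ᵥ (((x z).2 - Γ z *ᵥ (x z).1) + Γ z *ᵥ (x z).1)
        + (gamF T1 x1 z * gamF T1 x1 z) *ᵥ (x z).1
        + (gamF T2 x2 z * gamF T2 x2 z) *ᵥ (x z).1
        + (gamF T3 x3 z * gamF T3 x3 z) *ᵥ (x z).1 = 0
    rw [sub_add_cancel]
    simp only [vddF, SmatF, Matrix.add_mulVec, hΓdef, hSdef]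
    abel

theorem exists_entry_bound {n : ℕ} {a b : ℝ} (hab : a ≤ b) (M : ℝ → Matrix (Fin n) (Fin n) ℂ)
    (hM : ∀ i j, ContinuousOn (fun z => M z i j) (Icc a b)) :
    ∃ C : ℝ, 0 ≤ C ∧ ∀ z ∈ Icc a b, ∀ i j, ‖M z i j‖ ≤ C := by
  have hg : ContinuousOn (fun z => ∑ i, ∑ j, ‖M z i j‖) (Icc a b) :=
    continuousOn_finset_sum _ fun i _ => continuousOn_finset_sum _ fun j _ => (hM i j).norm
  obtain ⟨C0, hC0⟩ := isCompact_Icc.exists_bound_of_continuousOn hg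
  refine ⟨max C0 0, le_max_right _ _, ?_⟩
  intro z hz i j
  have h1 := hC0 z hz
  rw [Real.norm_eq_abs] at h1
  have h2 : ∑ i', ∑ j', ‖M z i' j'‖ ≤ C0 := (le_abs_self _).trans h1
  have hle1 : ‖M z i j‖ ≤ ∑ j', ‖M z i j'‖ :=
    Finset.single_le_sum (fun k _ => norm_nonneg _) (Finset.mem_univ j)
  have hle2 : (∑ j', ‖M z i j'‖) ≤ ∑ i', ∑ j', ‖M z i' j'‖ :=
    Finset.single_le_sum (fun k _ => Finset.sum_nonneg fun _ _ => norm_nonneg _)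
      (Finset.mem_univ i)
  have := le_max_left C0 0
  linarith

set_option maxHeartbeats 1000000 in
theorem sub_triple {n : ℕ} {a b : ℝ} {T0 T0' T1 T2 T3 : ℝ → Matrix (Fin n) (Fin n) ℂ}
    {c x1 x2 x3 : ℝ} {ua ub : Fin n → ℂ} {v1 v1' v1'' v2 v2' v2'' : ℝ → Fin n → ℂ}
    (h1 : IsDirichletNahmSol a b T0 T0' T1 T2 T3 c x1 x2 x3 ua ub v1 v1' v1'')
    (h2 : IsDirichletNahmSol a b T0 T0' T1 T2 T3 c x1 x2 x3 ua ub v2 v2' v2'') :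
    IsDirichletNahmSol a b T0 T0' T1 T2 T3 c x1 x2 x3 0 0
      (fun t => v1 t - v2 t) (fun t => v1' t - v2' t) (fun t => v1'' t - v2'' t) := by
  obtain ⟨a1, b1, c1, e1, f1, g1⟩ := h1
  obtain ⟨a2, b2, c2, e2, f2, g2⟩ := h2
  refine ⟨?_, ?_, ?_, ?_, ?_, ?_⟩
  · exact fun z hz i => (a1 z hz i).sub (a2 z hz i)
  · exact fun z hz i => (b1 z hz i).sub (b2 z hz i)
  · exact fun i => (c1 i).sub (c2 i)
  · intro z hz
    have he1 := e1 z hz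
    have he2 := e2 z hz
    have h3 := congrArg₂ (fun u v => u - v) he1 he2
    simp only [sub_zero] at h3
    rw [← h3]
    simp only [Matrix.mulVec_sub, Matrix.mulVec_add]
    abel
  · funext i
    simp only [Pi.sub_apply, f1, f2, Pi.zero_apply, sub_self]
  · funext i
    simp only [Pi.sub_apply, g1, g2, Pi.zero_apply, sub_self]

end NahmAux

/-- Existence and uniqueness for the Dirichlet problem of
`D₁*D₁ v = 0` on `[a, b]` with a skew-hermitian `C¹` background. -/
theorem dirichlet_existence_uniqueness {n : ℕ} (a b : ℝ) (hab : a < b)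
    (T0 T0' T1 T2 T3 : ℝ → Matrix (Fin n) (Fin n) ℂ)
    (hT0 : ∀ z ∈ Icc a b, ∀ i j,
        HasDerivWithinAt (fun t => T0 t i j) (T0' z i j) (Icc a b) z)
    (hT0' : ∀ i j, ContinuousOn (fun z => T0' z i j) (Icc a b))
    (hT1 : ∀ i j, ContinuousOn (fun z => T1 z i j) (Icc a b))
    (hT2 : ∀ i j, ContinuousOn (fun z => T2 z i j) (Icc a b))
    (hT3 : ∀ i j, ContinuousOn (fun z => T3 z i j) (Icc a b))
    (hskew : ∀ z ∈ Icc a b,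
        (T0 z)ᴴ = -T0 z ∧ (T1 z)ᴴ = -T1 z ∧ (T2 z)ᴴ = -T2 z ∧ (T3 z)ᴴ = -T3 z)
    (c x1 x2 x3 : ℝ) (ua ub : Fin n → ℂ) :
    ∃ v v' v'' : ℝ → Fin n → ℂ,
      IsDirichletNahmSol a b T0 T0' T1 T2 T3 c x1 x2 x3 ua ub v v' v'' ∧
      ∀ w w' w'' : ℝ → Fin n → ℂ,
        IsDirichletNahmSol a b T0 T0' T1 T2 T3 c x1 x2 x3 ua ub w w' w'' →
        ∀ z ∈ Icc a b, w z = v z := by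
    classical
  have hab' : a ≤ b := hab.le
  set Γ := NahmAux.gamF T0 c with hΓ
  set S := NahmAux.SmatF T1 T2 T3 x1 x2 x3 with hS
  have hT0c : ∀ i j, ContinuousOn (fun z => T0 z i j) (Icc a b) :=
    fun i j z hz => (hT0 z hz i j).continuousWithinAt
  have hΓc : ∀ i j, ContinuousOn (fun z => Γ z i j) (Icc a b) :=
    NahmAux.gam_entry_cont c hT0c
  have hSc : ∀ i j, ContinuousOn (fun z => S z i j) (Icc a b) :=
    NahmAux.Smat_entry_cont x1 x2 x3 hT1 hT2 hT3
  set θ : ℝ → ℝ := fun t => max a (min t b) with hθ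
  have hθc : Continuous θ := continuous_const.max (continuous_id.min continuous_const)
  have hθmem : ∀ t, θ t ∈ Icc a b :=
    fun t => ⟨le_max_left _ _, max_le hab' (min_le_right _ _)⟩
  have hθeq : ∀ t ∈ Icc a b, θ t = t := by
    intro t ht
    rw [hθ]
    simp only
    rw [min_eq_left ht.2, max_eq_right ht.1]
  set Γc : ℝ → Matrix (Fin n) (Fin n) ℂ := fun t => Γ (θ t) with hΓc2
  set Sc : ℝ → Matrix (Fin n) (Fin n) ℂ := fun t => S (θ t) with hSc2
  set Fc := NahmAux.Fv Γc Sc with hFc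
  have hΓcc : ∀ i j, Continuous fun t => Γc t i j :=
    fun i j => (hΓc i j).comp_continuous hθc hθmem
  have hScc : ∀ i j, Continuous fun t => Sc t i j :=
    fun i j => (hSc i j).comp_continuous hθc hθmem
  obtain ⟨Cγ, hCγ0, hCγb⟩ := NahmAux.exists_entry_bound hab' Γ hΓc
  obtain ⟨CS, hCS0, hCSb⟩ := NahmAux.exists_entry_bound hab' S hSc
  have hΓb : ∀ t i j, ‖Γc t i j‖ ≤ Cγ := fun t i j => hCγb (θ t) (hθmem t) i j
  have hSb : ∀ t i j, ‖Sc t i j‖ ≤ CS := fun t i j => hCSb (θ t) (hθmem t) i j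
  set K : ℝ := 1 + n * Cγ + (n * Cγ + n * CS) with hK
  have hK0 : 0 ≤ K := by positivity
  have hlip : ∀ t, LipschitzWith (Real.toNNReal K) (Fc t) :=
    NahmAux.Fv_lip Γc Sc Cγ CS hCγ0 hCS0 hΓb hSb
  have hFcont : ∀ x, Continuous fun t => Fc t x := NahmAux.Fv_cont Γc Sc hΓcc hScc
  have exw : ∀ w : (Fin n → ℂ) × (Fin n → ℂ), ∃ x : ℝ → (Fin n → ℂ) × (Fin n → ℂ),
      x a = w ∧ ∀ t ∈ Icc a b, HasDerivWithinAt x (Fc t (x t)) (Icc a b) t :=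
    fun w => NahmAux.exists_sol_Icc Fc K hK0 hlip hFcont hab' w
  choose sol hsola hsold using exw
  have hFeq : ∀ t ∈ Icc a b, ∀ y, Fc t y = NahmAux.Fv Γ S t y := by
    intro t ht y
    simp only [hFc, NahmAux.Fv, hΓc2, hSc2, hθeq t ht]
  have hsold' : ∀ w, ∀ t ∈ Icc a b,
      HasDerivWithinAt (sol w) (NahmAux.Fv Γ S t (sol w t)) (Icc a b) t := by
    intro w t ht
    rw [← hFeq t ht]
    exact hsold w t ht
  have htriple : ∀ w, IsDirichletNahmSol a b T0 T0' T1 T2 T3 c x1 x2 x3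
      ((sol w a).1) ((sol w b).1) (fun t => (sol w t).1)
      (fun t => (sol w t).2 - Γ t *ᵥ (sol w t).1)
      (NahmAux.vddF T0 T0' T1 T2 T3 c x1 x2 x3 (sol w)) :=
    fun w => NahmAux.sol_to_triple hab T0 T0' T1 T2 T3 hT0 hT0' hT1 hT2 hT3
      c x1 x2 x3 (sol w) (hsold' w)
  have huniq : ∀ x y : ℝ → (Fin n → ℂ) × (Fin n → ℂ),
      (∀ t ∈ Icc a b, HasDerivWithinAt x (Fc t (x t)) (Icc a b) t) →
      (∀ t ∈ Icc a b, HasDerivWithinAt y (Fc t (y t)) (Icc a b) t) →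
      x a = y a → ∀ t ∈ Icc a b, x t = y t :=
    fun x y hx hy h0 => NahmAux.sol_unique Fc _ hlip hx hy h0
  set Φ : ((Fin n → ℂ) × (Fin n → ℂ)) →ₗ[ℂ] ((Fin n → ℂ) × (Fin n → ℂ)) :=
    { toFun := fun w => (w.1, (sol w b).1)
      map_add' := by
        intro w w'
        have hsum : ∀ t ∈ Icc a b, sol (w + w') t = sol w t + sol w' t := by
          refine huniq _ _ (hsold _) ?_ (by rw [hsola, hsola, hsola])
          intro t ht
          have h := (hsold w t ht).add (hsold w' t ht)
          rwa [← NahmAux.Fv_add Γc Sc t (sol w t) (sol w' t)] at h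
        have hb := hsum b ⟨hab', le_rfl⟩
        refine Prod.ext ?_ ?_ <;> simp [hb]
      map_smul' := by
        intro m w
        have hs : ∀ t ∈ Icc a b, sol (m • w) t = m • sol w t := by
          refine huniq _ _ (hsold _) ?_ (by rw [hsola, hsola])
          intro t ht
          have h := (hsold w t ht).const_smul m
          rwa [← NahmAux.Fv_smul Γc Sc t m (sol w t)] at h
        have hb := hs b ⟨hab', le_rfl⟩
        refine Prod.ext ?_ ?_ <;> simp [hb] } with hΦ
  have hker : ∀ w, Φ w = 0 → w = 0 := by
    intro w hw
    have hw1 : w.1 = 0 := congrArg Prod.fst hw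
    have hwb : (sol w b).1 = 0 := congrArg Prod.snd hw
    have hva' : (sol w a).1 = 0 := by rw [hsola]; exact hw1
    have htr0 : IsDirichletNahmSol a b T0 T0' T1 T2 T3 c x1 x2 x3 0 0
        (fun t => (sol w t).1) (fun t => (sol w t).2 - Γ t *ᵥ (sol w t).1)
        (NahmAux.vddF T0 T0' T1 T2 T3 c x1 x2 x3 (sol w)) := by
      have h := htriple w
      rwa [hva', hwb] at h
    have hvanish := NahmAux.vanish_of_zero_bdry hab T0 T0' T1 T2 T3 hT0 hskew
      c x1 x2 x3 _ _ _ htr0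
    have hq0 : ∀ z ∈ Icc a b, (sol w z).2 = 0 := by
      intro z hz
      have hd1 : HasDerivWithinAt (fun s => (sol w s).1)
          ((sol w z).2 - Γc z *ᵥ (sol w z).1) (Icc a b) z := by
        have h := (ContinuousLinearMap.fst ℝ (Fin n → ℂ)
          (Fin n → ℂ)).hasFDerivAt.comp_hasDerivWithinAt z (hsold w z hz)
        simpa [hFc, NahmAux.Fv, Function.comp_def] using h
      have hd2 : HasDerivWithinAt (fun s => (sol w s).1) 0 (Icc a b) z :=
        (hasDerivWithinAt_const z (Icc a b) (0 : Fin n → ℂ)).congr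
          (fun t ht => hvanish t ht) (hvanish z hz)
      have h := NahmAux.derivWithin_unique hab hz hd1 hd2
      rw [hvanish z hz, Matrix.mulVec_zero, sub_zero] at h
      exact h
    have hw2 : w.2 = 0 := by
      have := hq0 a ⟨le_rfl, hab'⟩
      rwa [hsola] at this
    exact Prod.ext hw1 hw2
  have hinj : Function.Injective Φ := by
    intro u v huv
    have h0 : Φ (u - v) = 0 := by rw [map_sub, huv, sub_self]
    have := hker _ h0
    exact sub_eq_zero.1 this
  obtain ⟨w, hw⟩ := (LinearMap.injective_iff_surjective).1 hinj (ua, ub)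
  have h1 : (sol w a).1 = ua := by
    rw [hsola]
    exact congrArg Prod.fst hw
  have h2 : (sol w b).1 = ub := congrArg Prod.snd hw
  have hmain : IsDirichletNahmSol a b T0 T0' T1 T2 T3 c x1 x2 x3 ua ub
      (fun t => (sol w t).1) (fun t => (sol w t).2 - Γ t *ᵥ (sol w t).1)
      (NahmAux.vddF T0 T0' T1 T2 T3 c x1 x2 x3 (sol w)) := by
    have h := htriple w
    rwa [h1, h2] at h
  refine ⟨_, _, _, hmain, ?_⟩
  intro w1 w1' w1'' hw1 z hz
  have hdiff := NahmAux.sub_triple hw1 hmain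
  have hv := NahmAux.vanish_of_zero_bdry hab T0 T0' T1 T2 T3 hT0 hskew
    c x1 x2 x3 _ _ _ hdiff z hz
  have : w1 z - (sol w z).1 = 0 := hv
  exact sub_eq_zero.1 this
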